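/- arXiv:1807.06607 — 3 statements merged into one kernel-verified Lean document; each statement's English description precedes it below -/
import Mathlib

section
/- Let δ ≥ γ > 0 and let G be an r-edge-coloured graph on t vertices with minimum degree at least δt. Then G contains a spanning subgraph R with minimum degree at least (δ − γ)t which is the union of at most r²/γ monochromatic components. -/
/-- The monochromatic subgraph of `G` in colour `j`, for an edge-colouring `c`. -/
def colourSubgraph {V : Type*} (G : SimpleGraph V) {r : ℕ} (c : Sym2 V → Fin r) (j : Fin r) :
    SimpleGraph V :=
  SimpleGraph.fromEdgeSet {e | e ∈ G.edgeSet ∧ c e = j}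

lemma colourSubgraph_adj {V : Type*} (G : SimpleGraph V) {r : ℕ} (c : Sym2 V → Fin r)
    (j : Fin r) (u v : V) :
    (colourSubgraph G c j).Adj u v ↔ G.Adj u v ∧ c s(u, v) = j := by
  simp only [colourSubgraph, SimpleGraph.fromEdgeSet_adj, Set.mem_setOf_eq,
    SimpleGraph.mem_edgeSet]
  constructor
  · rintro ⟨⟨h1, h2⟩, -⟩; exact ⟨h1, h2⟩
  · rintro ⟨h1, h2⟩; exact ⟨⟨h1, h2⟩, h1.ne⟩

lemma ncard_biUnion_le {α β : Type*} [Fintype α] (s : Finset β) (f : β → Set α) :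
    (⋃ b ∈ s, f b).ncard ≤ ∑ b ∈ s, (f b).ncard := by
  classical
  induction s using Finset.induction with
  | empty => simp
  | @insert a s hb ih =>
      rw [Finset.set_biUnion_insert, Finset.sum_insert hb]
      exact (Set.ncard_union_le _ _).trans (by omega)

/-- Lemma 7.1: an `r`-edge-coloured graph on `t` vertices with minimum degree at least `δt`
contains a spanning subgraph `R` with minimum degree at least `(δ-γ)t` which is the union of
at most `r²/γ` monochromatic components. -/
theorem stmt0 {V : Type*} [Fintype V] (r : ℕ) (G : SimpleGraph V) (c : Sym2 V → Fin r)
    (δ γ : ℝ) (hγ : 0 < γ) (hγδ : γ ≤ δ)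
    (hdeg : ∀ v, δ * (Fintype.card V : ℝ) ≤ ((G.neighborSet v).ncard : ℝ)) :
    ∃ R : SimpleGraph V, R ≤ G ∧
      (∀ v, (δ - γ) * (Fintype.card V : ℝ) ≤ ((R.neighborSet v).ncard : ℝ)) ∧
      ∃ s : ℕ, (s : ℝ) ≤ (r : ℝ) ^ 2 / γ ∧
        ∃ (col : Fin s → Fin r)
          (K : ∀ i : Fin s, (colourSubgraph G c (col i)).ConnectedComponent),
          ∀ u v : V, R.Adj u v ↔ ∃ i : Fin s,
            (colourSubgraph G c (col i)).Adj u v ∧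
            (colourSubgraph G c (col i)).connectedComponentMk u = K i := by
  classical
  set t := Fintype.card V with ht
  rcases isEmpty_or_nonempty V with hV | hV
  · refine ⟨⊥, bot_le, ?_, 0, ?_, Fin.elim0, fun i => i.elim0, ?_⟩
    · intro v; exact (hV.false v).elim
    · push_cast
      positivity
    · intro u v; exact (hV.false u).elim
  obtain ⟨v0⟩ := hV
  have hr : 0 < r := by
    rcases Nat.eq_zero_or_pos r with h | h
    · exact ((h ▸ c s(v0, v0)) : Fin 0).elim0
    · exact h
  have ht0 : 0 < t := Fintype.card_pos_iff.mpr ⟨v0⟩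
  have ht0' : (0 : ℝ) < t := by exact_mod_cast ht0
  have hr0' : (0 : ℝ) < r := by exact_mod_cast hr
  set Big : Finset (Σ j : Fin r, (colourSubgraph G c j).ConnectedComponent) :=
    Finset.univ.filter (fun p => γ * t / r ≤ (p.2.supp.ncard : ℝ)) with hBig
  set s := Big.card with hs
  let e := Big.equivFin
  let col : Fin s → Fin r := fun i => (e.symm i).1.1
  let K : ∀ i : Fin s, (colourSubgraph G c (col i)).ConnectedComponent :=
    fun i => (e.symm i).1.2
  let R : SimpleGraph V :=
    { Adj := fun u v => ∃ i : Fin s,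
        (colourSubgraph G c (col i)).Adj u v ∧
        (colourSubgraph G c (col i)).connectedComponentMk u = K i
      symm := by
        constructor
        rintro u v ⟨i, hadj, hcomp⟩
        exact ⟨i, hadj.symm, by
          rw [← hcomp]; exact SimpleGraph.ConnectedComponent.sound hadj.symm.reachable⟩
      loopless := by constructor; rintro u ⟨i, hadj, -⟩; exact hadj.ne rfl }
  have hRG : R ≤ G := by
    rintro u v ⟨i, hadj, -⟩
    exact ((colourSubgraph_adj G c _ u v).mp hadj).1
  have hkey : ∀ u v (j : Fin r), (colourSubgraph G c j).Adj v u →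
      (⟨j, (colourSubgraph G c j).connectedComponentMk v⟩ :
        Σ j : Fin r, (colourSubgraph G c j).ConnectedComponent) ∈ Big → R.Adj v u := by
    intro u v j hadj hmem
    refine ⟨e ⟨⟨j, (colourSubgraph G c j).connectedComponentMk v⟩, hmem⟩, ?_, ?_⟩
    · show (colourSubgraph G c (col _)).Adj v u
      simp only [col, Equiv.symm_apply_apply]
      exact hadj
    · show (colourSubgraph G c (col _)).connectedComponentMk v = K _
      simp only [col, K]
      rw [Equiv.symm_apply_apply]
  refine ⟨R, hRG, ?_, s, ?_, col, K, fun u v => Iff.rfl⟩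
  · -- degree bound
    intro v
    set NG := G.neighborSet v with hNG
    set NR := R.neighborSet v with hNR
    have hsub : NR ⊆ NG := fun u hu => hRG hu
    set sf : Finset (Fin r) := Finset.univ.filter
      (fun j => (⟨j, (colourSubgraph G c j).connectedComponentMk v⟩ :
        Σ j : Fin r, (colourSubgraph G c j).ConnectedComponent) ∉ Big) with hsf
    have hdiff : NG \ NR ⊆ ⋃ j ∈ sf, (colourSubgraph G c j).neighborSet v := by
      rintro u ⟨hG, hR⟩
      have hGadj : G.Adj v u := hG
      have hadj : (colourSubgraph G c (c s(v, u))).Adj v u :=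
        (colourSubgraph_adj G c _ v u).mpr ⟨hGadj, rfl⟩
      have hj : (⟨c s(v, u), (colourSubgraph G c (c s(v, u))).connectedComponentMk v⟩ :
          Σ j : Fin r, (colourSubgraph G c j).ConnectedComponent) ∉ Big :=
        fun hmem => hR (hkey u v _ hadj hmem)
      have hmemsf : c s(v, u) ∈ sf := Finset.mem_filter.mpr ⟨Finset.mem_univ _, hj⟩
      exact Set.mem_biUnion hmemsf hadj
    have h1 : ((NG \ NR).ncard : ℝ) ≤
        ∑ j ∈ sf, (((colourSubgraph G c j).neighborSet v).ncard : ℝ) := by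
      push_cast
      exact_mod_cast le_trans
        (Nat.cast_le.mpr (Set.ncard_le_ncard hdiff (Set.toFinite _)))
        (Nat.cast_le.mpr (ncard_biUnion_le sf _))
    have h2 : ∀ j ∈ sf, (((colourSubgraph G c j).neighborSet v).ncard : ℝ) ≤ γ * t / r := by
      intro j hj
      have hjn : ¬ (γ * t / r ≤
          ((((colourSubgraph G c j).connectedComponentMk v).supp.ncard : ℝ))) := by
        have := (Finset.mem_filter.mp hj).2
        simpa [hBig] using this
      push_neg at hjn
      have hsub2 : (colourSubgraph G c j).neighborSet v ⊆
          ((colourSubgraph G c j).connectedComponentMk v).supp := by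
        intro u hu
        simp only [SimpleGraph.ConnectedComponent.mem_supp_iff]
        exact SimpleGraph.ConnectedComponent.sound (hu : (colourSubgraph G c j).Adj v u).symm.reachable
      have := Set.ncard_le_ncard hsub2 (Set.toFinite _)
      calc (((colourSubgraph G c j).neighborSet v).ncard : ℝ)
          ≤ ((((colourSubgraph G c j).connectedComponentMk v).supp.ncard : ℝ)) := by
            exact_mod_cast this
        _ ≤ γ * t / r := le_of_lt hjn
    have h3 : ((NG \ NR).ncard : ℝ) ≤ γ * t := by
      calc ((NG \ NR).ncard : ℝ) ≤ ∑ j ∈ sf, (((colourSubgraph G c j).neighborSet v).ncard : ℝ) := h1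
        _ ≤ ∑ _j ∈ sf, (γ * t / r) := Finset.sum_le_sum h2
        _ = sf.card * (γ * t / r) := by rw [Finset.sum_const, nsmul_eq_mul]
        _ ≤ r * (γ * t / r) := by
            have hcard : (sf.card : ℝ) ≤ r := by
              exact_mod_cast (Finset.card_le_card (Finset.subset_univ sf)).trans
                (le_of_eq (Finset.card_univ.trans (Fintype.card_fin r)))
            have : (0:ℝ) ≤ γ * t / r := by positivity
            exact mul_le_mul_of_nonneg_right hcard this
        _ = γ * t := by field_simp
    have hsplit : (NG \ NR).ncard + NR.ncard = NG.ncard :=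
      Set.ncard_diff_add_ncard_of_subset hsub (Set.toFinite _)
    have hNGd := hdeg v
    have hsplit' : ((NG \ NR).ncard : ℝ) + NR.ncard = NG.ncard := by exact_mod_cast hsplit
    rw [← hNG] at hNGd
    linarith
  · -- count bound
    have hsum1 : ∀ j : Fin r, ∑ K : (colourSubgraph G c j).ConnectedComponent,
        (K.supp.ncard : ℝ) = t := by
      intro j
      have hfib : (Finset.univ : Finset V).card =
          ∑ K ∈ (Finset.univ : Finset ((colourSubgraph G c j).ConnectedComponent)),
            (Finset.univ.filter
              (fun v => (colourSubgraph G c j).connectedComponentMk v = K)).card :=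
        Finset.card_eq_sum_card_fiberwise (fun v _ => Finset.mem_univ _)
      have hsupp : ∀ K : (colourSubgraph G c j).ConnectedComponent,
          K.supp.ncard = (Finset.univ.filter
            (fun v => (colourSubgraph G c j).connectedComponentMk v = K)).card := by
        intro K
        rw [Set.ncard_eq_toFinset_card']
        congr 1
        ext v
        simp [SimpleGraph.ConnectedComponent.mem_supp_iff]
      have : (t : ℕ) = ∑ K : (colourSubgraph G c j).ConnectedComponent, K.supp.ncard := by
        rw [ht]
        simpa [hsupp, Finset.card_univ] using hfib
      rw [← Nat.cast_sum, ← this]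
    have hmain : (s : ℝ) * (γ * t / r) ≤ r * t := by
      calc (s : ℝ) * (γ * t / r) = ∑ _p ∈ Big, (γ * t / r) := by
            rw [Finset.sum_const, nsmul_eq_mul, hs]
        _ ≤ ∑ p ∈ Big, (p.2.supp.ncard : ℝ) := by
            refine Finset.sum_le_sum ?_
            intro p hp
            have := (Finset.mem_filter.mp hp).2
            exact this
        _ ≤ ∑ p : (Σ j : Fin r, (colourSubgraph G c j).ConnectedComponent),
              (p.2.supp.ncard : ℝ) := by
            refine Finset.sum_le_sum_of_subset_of_nonneg (Finset.subset_univ _) ?_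
            intro p _ _; positivity
        _ = ∑ j : Fin r, ∑ K : (colourSubgraph G c j).ConnectedComponent,
              (K.supp.ncard : ℝ) := by
            rw [← Finset.univ_sigma_univ, Finset.sum_sigma]
        _ = ∑ _j : Fin r, (t : ℝ) := by
            exact Finset.sum_congr rfl fun j _ => hsum1 j
        _ = r * t := by rw [Finset.sum_const, nsmul_eq_mul, Finset.card_univ, Fintype.card_fin]
    rw [le_div_iff₀ hγ]
    have h4 : (s : ℝ) * γ * t ≤ r ^ 2 * t := by
      have := mul_le_mul_of_nonneg_right hmain (le_of_lt hr0')
      field_simp at this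
      nlinarith
    nlinarith
end

section
/- Let r ≥ 2 and let G be a graph with disjoint vertex sets U, W where |W| ≤ t, such that (i) every r-set S ⊆ W has common neighbourhood of size at least 6·r^{r+1}·t in U, and (ii) any disjoint X, Y ⊆ U with |X|, |Y| ≥ t satisfy e_G(X,Y) > 0. Define, for any r-edge-colouring of G with colours [r], an auxiliary multigraph H on vertex set W where v, v' are joined by an edge of colour j if either (a) there are at least 2t vertices u ∈ U such that the path v u v' is monochromatic in colour j, or (b) there is a matching M of size 2t inside U such that for each edge uu' ∈ M the path v u u' v' (or v u' u v') is monochromatic in colour j. Then the independence number of H is at most 2r − 1. -/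
lemma match_lem {V : Type*} [DecidableEq V] (G : SimpleGraph V) [DecidableRel G.Adj]
    (t : ℕ) (U : Finset V)
    (hii : ∀ X ⊆ U, ∀ Y ⊆ U, Disjoint X Y → t ≤ X.card → t ≤ Y.card →
      0 < (G.interedges X Y).card) :
    ∀ (k : ℕ) (X Y : Finset V), X ⊆ U → Y ⊆ U → Disjoint X Y →
      t + k ≤ X.card → t + k ≤ Y.card →
      ∃ M : Finset (V × V), M.card = k ∧
        (∀ e ∈ M, e.1 ∈ X ∧ e.2 ∈ Y ∧ G.Adj e.1 e.2) ∧
        (∀ e ∈ M, ∀ f ∈ M, e ≠ f → e.1 ≠ f.1 ∧ e.2 ≠ f.2) := by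
  intro k
  induction k with
  | zero => intro X Y _ _ _ _ _; exact ⟨∅, rfl, by simp, by simp⟩
  | succ k ih =>
    intro X Y hXU hYU hXY hX hY
    have hpos := hii X hXU Y hYU hXY (by omega) (by omega)
    obtain ⟨⟨a, b⟩, hab⟩ := Finset.card_pos.mp hpos
    rw [SimpleGraph.mem_interedges_iff] at hab
    obtain ⟨haX, hbY, hadj⟩ := hab
    have hXc : t + k ≤ (X.erase a).card := by
      rw [Finset.card_erase_of_mem haX]; omega
    have hYc : t + k ≤ (Y.erase b).card := by
      rw [Finset.card_erase_of_mem hbY]; omega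
    obtain ⟨M, hMc, hMm, hMd⟩ := ih (X.erase a) (Y.erase b)
      ((Finset.erase_subset _ _).trans hXU) ((Finset.erase_subset _ _).trans hYU)
      (hXY.mono (Finset.erase_subset _ _) (Finset.erase_subset _ _)) hXc hYc
    have habM : (a, b) ∉ M := fun h => (Finset.ne_of_mem_erase (hMm _ h).1) rfl
    refine ⟨insert (a, b) M, ?_, ?_, ?_⟩
    · rw [Finset.card_insert_of_notMem habM, hMc]
    · intro e he
      rcases Finset.mem_insert.mp he with rfl | he
      · exact ⟨haX, hbY, hadj⟩
      · exact ⟨(Finset.erase_subset _ _) (hMm _ he).1, (Finset.erase_subset _ _) (hMm _ he).2.1,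
          (hMm _ he).2.2⟩
    · intro e he f hf hef
      rcases Finset.mem_insert.mp he with rfl | he <;>
        rcases Finset.mem_insert.mp hf with rfl | hf
      · exact absurd rfl hef
      · exact ⟨fun h => Finset.ne_of_mem_erase (hMm _ hf).1 h.symm,
          fun h => Finset.ne_of_mem_erase (hMm _ hf).2.1 h.symm⟩
      · exact ⟨Finset.ne_of_mem_erase (hMm _ he).1, Finset.ne_of_mem_erase (hMm _ he).2.1⟩
      · exact hMd _ he _ hf hef

lemma pigeon_lem {V α : Type*} [DecidableEq V] [Fintype α] [DecidableEq α] [Nonempty α]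
    (N : Finset V) (pat : V → α) (n : ℕ) (h : Fintype.card α * n ≤ N.card) :
    ∃ f : α, n ≤ (N.filter fun u => pat u = f).card := by
  obtain ⟨f, _, hf⟩ := Finset.exists_le_card_fiber_of_mul_le_card_of_maps_to
    (fun a _ => Finset.mem_univ (pat a)) Finset.univ_nonempty
    (by rwa [Finset.card_univ])
  exact ⟨f, hf⟩

lemma caseA_lem {V : Type*} [Fintype V] [DecidableEq V] (G : SimpleGraph V) [DecidableRel G.Adj]
    {r : ℕ} (c : Sym2 V → Fin r) (t : ℕ) (U : Finset V) (j : Fin r) (v v' : V)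
    (A : Finset V) (hAU : A ⊆ U)
    (hadj : ∀ u ∈ A, G.Adj v u ∧ G.Adj v' u)
    (hcol : ∀ u ∈ A, c s(v, u) = j ∧ c s(v', u) = j)
    (hcard : 2 * t ≤ A.card) :
    2 * t ≤ (U.filter fun u =>
        G.Adj v u ∧ G.Adj u v' ∧ c s(v, u) = j ∧ c s(u, v') = j).card := by
  refine hcard.trans (Finset.card_le_card fun u hu => ?_)
  refine Finset.mem_filter.mpr ⟨hAU hu, (hadj u hu).1, (hadj u hu).2.symm, (hcol u hu).1, ?_⟩
  rw [Sym2.eq_swap]; exact (hcol u hu).2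



/-- The independence number of the auxiliary multigraph `H` on `W` (whose edges of colour `j`
are given by conditions (a) and (b)) is at most `2r - 1`: every `2r`-set in `W` spans an
edge of `H`. -/
theorem stmt4 {V : Type*} [Fintype V] [DecidableEq V] (G : SimpleGraph V) [DecidableRel G.Adj]
    (r t : ℕ) (hr : 2 ≤ r) (ht : 2 ≤ t) (U W : Finset V) (hUW : Disjoint U W)
    (hW : W.card ≤ t) (c : Sym2 V → Fin r)
    (hi : ∀ S ⊆ W, S.card = r →
      6 * r ^ (r + 1) * t ≤ (U.filter fun u => ∀ v ∈ S, G.Adj v u).card)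
    (hii : ∀ X ⊆ U, ∀ Y ⊆ U, Disjoint X Y → t ≤ X.card → t ≤ Y.card →
      0 < (G.interedges X Y).card) :
    ∀ S ⊆ W, S.card = 2 * r → ∃ v ∈ S, ∃ v' ∈ S, v ≠ v' ∧ ∃ j : Fin r,
      -- (a): at least 2t vertices u ∈ U with v u v' a path of colour j
      (2 * t ≤ (U.filter fun u =>
        G.Adj v u ∧ G.Adj u v' ∧ c s(v, u) = j ∧ c s(u, v') = j).card) ∨
      -- (b): a matching M of size 2t in U with v u u' v' (or v u' u v') a path of colour j
      (∃ M : Finset (V × V), M.card = 2 * t ∧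
        (∀ e ∈ M, e.1 ∈ U ∧ e.2 ∈ U ∧ e.1 ≠ e.2 ∧ G.Adj e.1 e.2) ∧
        (∀ e ∈ M, ∀ f ∈ M, e ≠ f →
          e.1 ≠ f.1 ∧ e.1 ≠ f.2 ∧ e.2 ≠ f.1 ∧ e.2 ≠ f.2) ∧
        (∀ e ∈ M,
          (G.Adj v e.1 ∧ G.Adj e.1 e.2 ∧ G.Adj e.2 v' ∧
            c s(v, e.1) = j ∧ c s(e.1, e.2) = j ∧ c s(e.2, v') = j) ∨
          (G.Adj v e.2 ∧ G.Adj e.2 e.1 ∧ G.Adj e.1 v' ∧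
            c s(v, e.2) = j ∧ c s(e.2, e.1) = j ∧ c s(e.1, v') = j))) := by
  have hFr : Nonempty (Fin r) := ⟨⟨0, by omega⟩⟩
  intro S hSW hScard
  -- split S into S1 and S2
  obtain ⟨S1, hS1sub, hS1card⟩ := S.exists_subset_card_eq (n := r) (by omega)
  set S2 : Finset V := S \ S1 with hS2def
  have hS2sub : S2 ⊆ S := Finset.sdiff_subset
  have hS2card : S2.card = r := by
    rw [hS2def, Finset.card_sdiff_of_subset hS1sub, hScard, hS1card]; omega
  -- common neighbourhoods
  set N1 : Finset V := U.filter fun u => ∀ v ∈ S1, G.Adj v u with hN1def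
  set N2 : Finset V := U.filter fun u => ∀ v ∈ S2, G.Adj v u with hN2def
  have hN1 : 6 * r ^ (r + 1) * t ≤ N1.card := hi S1 (hS1sub.trans hSW) hS1card
  have hN2 : 6 * r ^ (r + 1) * t ≤ N2.card := hi S2 (hS2sub.trans hSW) hS2card
  -- pigeonhole on colour patterns
  have hcard1 : Fintype.card (↥S1 → Fin r) = r ^ r := by
    rw [Fintype.card_fun, Fintype.card_coe, hS1card, Fintype.card_fin]
  have hcard2 : Fintype.card (↥S2 → Fin r) = r ^ r := by
    rw [Fintype.card_fun, Fintype.card_coe, hS2card, Fintype.card_fin]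
  obtain ⟨f, hf⟩ := pigeon_lem N1 (fun u (v : ↥S1) => c s((v : V), u)) (6 * r * t)
    (by rw [hcard1]; calc r ^ r * (6 * r * t) = 6 * (r ^ r * r) * t := by ring
          _ = 6 * r ^ (r + 1) * t := by rw [← pow_succ]
          _ ≤ N1.card := hN1)
  obtain ⟨g, hg⟩ := pigeon_lem N2 (fun u (v : ↥S2) => c s((v : V), u)) (6 * r * t)
    (by rw [hcard2]; calc r ^ r * (6 * r * t) = 6 * (r ^ r * r) * t := by ring
          _ = 6 * r ^ (r + 1) * t := by rw [← pow_succ]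
          _ ≤ N2.card := hN2)
  set A : Finset V := N1.filter (fun u => (fun v : ↥S1 => c s((v : V), u)) = f) with hAdef
  set B : Finset V := N2.filter (fun u => (fun v : ↥S2 => c s((v : V), u)) = g) with hBdef
  have h2t6 : 2 * t ≤ 6 * r * t :=
    le_trans (mul_le_mul_left (by omega : 2 ≤ 6 * r) t) (le_of_eq rfl)
  have hAU : A ⊆ U := fun u hu =>
    (Finset.mem_filter.mp ((Finset.filter_subset _ _) hu)).1
  have hBU : B ⊆ U := fun u hu =>
    (Finset.mem_filter.mp ((Finset.filter_subset _ _) hu)).1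
  have hAcol : ∀ u ∈ A, ∀ (v : V) (hv : v ∈ S1), G.Adj v u ∧ c s(v, u) = f ⟨v, hv⟩ := by
    intro u hu v hv
    obtain ⟨hu1, hu2⟩ := Finset.mem_filter.mp hu
    exact ⟨(Finset.mem_filter.mp hu1).2 v hv, congrFun hu2 ⟨v, hv⟩⟩
  have hBcol : ∀ u ∈ B, ∀ (v : V) (hv : v ∈ S2), G.Adj v u ∧ c s(v, u) = g ⟨v, hv⟩ := by
    intro u hu v hv
    obtain ⟨hu1, hu2⟩ := Finset.mem_filter.mp hu
    exact ⟨(Finset.mem_filter.mp hu1).2 v hv, congrFun hu2 ⟨v, hv⟩⟩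
  by_cases hfinj : Function.Injective f
  case neg =>
    -- two vertices of S1 with the same colour: case (a)
    rw [Function.Injective] at hfinj
    push_neg at hfinj
    obtain ⟨v1, v2, hfv, hvne⟩ := hfinj
    refine ⟨v1, hS1sub v1.2, v2, hS1sub v2.2, Subtype.coe_ne_coe.mpr hvne, f v1, Or.inl ?_⟩
    refine caseA_lem G c t U (f v1) v1 v2 A hAU ?_ ?_ (h2t6.trans hf)
    · exact fun u hu => ⟨(hAcol u hu v1 v1.2).1, (hAcol u hu v2 v2.2).1⟩
    · intro u hu
      refine ⟨(hAcol u hu v1 v1.2).2.trans (by congr), ?_⟩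
      rw [(hAcol u hu v2 v2.2).2]; rw [← hfv]
  case pos =>
  by_cases hginj : Function.Injective g
  case neg =>
    rw [Function.Injective] at hginj
    push_neg at hginj
    obtain ⟨v1, v2, hgv, hvne⟩ := hginj
    refine ⟨v1, hS2sub v1.2, v2, hS2sub v2.2, Subtype.coe_ne_coe.mpr hvne, g v1, Or.inl ?_⟩
    refine caseA_lem G c t U (g v1) v1 v2 B hBU ?_ ?_ (h2t6.trans hg)
    · exact fun u hu => ⟨(hBcol u hu v1 v1.2).1, (hBcol u hu v2 v2.2).1⟩
    · intro u hu
      refine ⟨(hBcol u hu v1 v1.2).2.trans (by congr), ?_⟩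
      rw [(hBcol u hu v2 v2.2).2]; rw [← hgv]
  case pos =>
  -- both injective, hence surjective: case (b)
  have hfsurj : Function.Surjective f :=
    ((Fintype.bijective_iff_injective_and_card f).mpr
      ⟨hfinj, by rw [Fintype.card_coe, hS1card, Fintype.card_fin]⟩).2
  have hgsurj : Function.Surjective g :=
    ((Fintype.bijective_iff_injective_and_card g).mpr
      ⟨hginj, by rw [Fintype.card_coe, hS2card, Fintype.card_fin]⟩).2
  -- trim A, make B disjoint from it
  have h36 : 3 * r * t ≤ 6 * r * t := mul_le_mul_left (by omega : 3 * r ≤ 6 * r) t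
  obtain ⟨A0, hA0sub, hA0card⟩ := A.exists_subset_card_eq (n := 3 * r * t) (h36.trans hf)
  set B0 : Finset V := B \ A0 with hB0def
  have hB0sub : B0 ⊆ B := Finset.sdiff_subset
  have hB0card : 3 * r * t ≤ B0.card := by
    have h1 : B.card ≤ B0.card + A0.card := Finset.card_le_card_sdiff_add_card
    have h2 : 6 * r * t ≤ B.card := hg
    have h3 : 3 * r * t + 3 * r * t = 6 * r * t := by ring
    omega
  have hdisj : Disjoint A0 B0 := Finset.disjoint_sdiff
  -- build a matching of size 2rt between A0 and B0
  have hrt : 1 * t ≤ r * t := mul_le_mul_left (by omega : 1 ≤ r) t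
  have hsz : t + 2 * r * t ≤ 3 * r * t := by
    have e1 : 2 * r * t = r * t + r * t := by ring
    have e2 : 3 * r * t = r * t + r * t + r * t := by ring
    omega
  obtain ⟨M1, hM1c, hM1m, hM1d⟩ := match_lem G t U hii (2 * r * t) A0 B0
    ((hA0sub.trans hAU)) (hB0sub.trans hBU) hdisj
    (hsz.trans (le_of_eq hA0card.symm)) (hsz.trans hB0card)
  -- pigeonhole on colours of matching edges
  obtain ⟨j, hj⟩ := pigeon_lem (V := V × V) M1 (fun e => c s(e.1, e.2)) (2 * t)
    (by rw [Fintype.card_fin, hM1c]; exact le_of_eq (by ring))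
  set M2 : Finset (V × V) := M1.filter (fun e => c s(e.1, e.2) = j) with hM2def
  obtain ⟨M, hMsub, hMcard⟩ := M2.exists_subset_card_eq (n := 2 * t) hj
  have hMsub1 : M ⊆ M1 := hMsub.trans (Finset.filter_subset _ _)
  have hMcol : ∀ e ∈ M, c s(e.1, e.2) = j := fun e he => (Finset.mem_filter.mp (hMsub he)).2
  obtain ⟨v1, hv1⟩ := hfsurj j
  obtain ⟨v2, hv2⟩ := hgsurj j
  have hv1S : (v1 : V) ∈ S1 := v1.2
  have hv2S : (v2 : V) ∈ S2 := v2.2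
  have hvne : (v1 : V) ≠ (v2 : V) := by
    intro h
    exact (Finset.mem_sdiff.mp hv2S).2 (h ▸ hv1S)
  refine ⟨v1, hS1sub hv1S, v2, hS2sub hv2S, hvne, j, Or.inr ⟨M, hMcard, ?_, ?_, ?_⟩⟩
  · intro e he
    obtain ⟨he1, he2, headj⟩ := hM1m e (hMsub1 he)
    exact ⟨hAU (hA0sub he1), hBU (hB0sub he2),
      fun h => Finset.disjoint_left.mp hdisj he1 (h ▸ he2), headj⟩
  · intro e he e' he' hee
    obtain ⟨he1, he2, _⟩ := hM1m e (hMsub1 he)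
    obtain ⟨he1', he2', _⟩ := hM1m e' (hMsub1 he')
    obtain ⟨h1, h2⟩ := hM1d e (hMsub1 he) e' (hMsub1 he') hee
    exact ⟨h1, fun h => Finset.disjoint_left.mp hdisj he1 (h ▸ he2'),
      fun h => Finset.disjoint_left.mp hdisj he1' (h ▸ he2), h2⟩
  · intro e he
    obtain ⟨he1, he2, headj⟩ := hM1m e (hMsub1 he)
    have hA1 := hAcol e.1 (hA0sub he1) v1 hv1S
    have hB2 := hBcol e.2 (hB0sub he2) v2 hv2S
    refine Or.inl ⟨hA1.1, headj, ?_, ?_, hMcol e he, ?_⟩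
    · exact (hB2.1).symm
    · rw [hA1.2]; rw [← hv1]
    · rw [Sym2.eq_swap, hB2.2, ← hv2]
end

section
/- Fix 0 < α, β < 1 and let C = 6/(α²β) and D = 9/α². Then for every p = p(n) ∈ (0,1), with high probability the random graph G ~ G(n,p) satisfies: for any two disjoint vertex subsets X, Y with either (|X|, |Y| ≥ D log n / p) or (|X| ≥ C/p and |Y| ≥ βn), one has e(X,Y) = (1 ± α)|X||Y|p. -/
open scoped NNReal ENNReal
open MeasureTheory Filter

/-- The binomial random graph model `G(n,p)`: the product Bernoulli measure on edge
indicator functions `Sym2 (Fin n) → Bool`. -/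
noncomputable def gnp (n : ℕ) (p : ℝ≥0) (hp : p ≤ 1) :
    Measure (Sym2 (Fin n) → Bool) :=
  Measure.pi fun _ => (PMF.bernoulli p hp).toMeasure

/-- The graph determined by an edge indicator function. -/
def graphOf {n : ℕ} (ω : Sym2 (Fin n) → Bool) : SimpleGraph (Fin n) :=
  SimpleGraph.fromEdgeSet {e | ω e = true}

/-- The number of edges of `G` between disjoint vertex sets `X` and `Y`, counted as ordered
pairs `(x,y)` with `x ∈ X`, `y ∈ Y`. -/
noncomputable def edgeCount {n : ℕ} (G : SimpleGraph (Fin n)) (X Y : Set (Fin n)) : ℕ :=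
  {e : Fin n × Fin n | e.1 ∈ X ∧ e.2 ∈ Y ∧ G.Adj e.1 e.2}.ncard

namespace StmtAux
variable {n : ℕ} {p : ℝ≥0}

noncomputable def W (p : ℝ≥0) (ω : Sym2 (Fin n) → Bool) : ℝ :=
  ∏ e : Sym2 (Fin n), (if ω e then (p:ℝ) else 1 - (p:ℝ))

lemma W_nonneg (hp1 : p ≤ 1) (ω : Sym2 (Fin n) → Bool) : 0 ≤ W p ω := by
  apply Finset.prod_nonneg
  intro e _
  have : (p:ℝ) ≤ 1 := by exact_mod_cast hp1
  split
  · positivity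
  · linarith

lemma gnp_singleton (hp1 : p ≤ 1) (ω : Sym2 (Fin n) → Bool) :
    gnp n p hp1 {ω} = ENNReal.ofReal (W p ω) := by
  rw [gnp, ← Set.univ_pi_singleton ω, Measure.pi_pi]
  have h1 : ∀ e : Sym2 (Fin n),
      ((PMF.bernoulli p hp1).toMeasure {ω e})
        = ENNReal.ofReal (if ω e then (p:ℝ) else 1 - (p:ℝ)) := by
    intro e
    rw [PMF.toMeasure_apply_singleton _ _ (measurableSet_singleton _),
      PMF.bernoulli_apply]
    cases h : ω e
    · simp only [h, cond_false, if_false, Bool.false_eq_true]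
      rw [ENNReal.ofReal_sub _ (by exact_mod_cast p.2), ENNReal.ofReal_one,
        ENNReal.ofReal_coe_nnreal, ENNReal.coe_sub, ENNReal.coe_one]
    · simp [h, ENNReal.ofReal_coe_nnreal]
  simp_rw [h1]
  rw [W, ← ENNReal.ofReal_prod_of_nonneg]
  intro e _
  have : (p:ℝ) ≤ 1 := by exact_mod_cast hp1
  split
  · positivity
  · linarith

lemma gnp_set (hp1 : p ≤ 1) (S : Set (Sym2 (Fin n) → Bool)) :
    gnp n p hp1 S = ENNReal.ofReal (∑ ω ∈ S.toFinite.toFinset, W p ω) := by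
  have hS : S = ⋃ ω ∈ S.toFinite.toFinset, {ω} := by simp
  nth_rewrite 1 [hS]
  rw [measure_biUnion_finset]
  · simp_rw [gnp_singleton hp1]
    rw [ENNReal.ofReal_sum_of_nonneg fun ω _ => W_nonneg hp1 ω]
  · intro x _ y _ hxy
    simp [Function.onFun, Set.disjoint_singleton, hxy]
  · intro _ _
    exact measurableSet_singleton _

instance (n : ℕ) (p : ℝ≥0) (hp : p ≤ 1) : IsProbabilityMeasure (gnp n p hp) := by
  unfold gnp; infer_instance

lemma mgf (p : ℝ≥0) (E : Finset (Sym2 (Fin n))) (x : ℝ) :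
    ∑ ω : Sym2 (Fin n) → Bool, W p ω * x ^ (E.filter (fun e => ω e = true)).card
      = ((p:ℝ) * x + (1 - (p:ℝ))) ^ E.card := by
  classical
  have hx : ∀ ω : Sym2 (Fin n) → Bool,
      x ^ (E.filter (fun e => ω e = true)).card
        = ∏ e : Sym2 (Fin n), (if e ∈ E ∧ ω e = true then x else 1) := by
    intro ω
    rw [← Finset.prod_const,
      show E.filter (fun e => ω e = true)
        = Finset.univ.filter (fun e => e ∈ E ∧ ω e = true) by
        ext e; simp, Finset.prod_filter]
  simp_rw [W, hx, ← Finset.prod_mul_distrib]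
  have key := Finset.prod_univ_sum (fun _ : Sym2 (Fin n) => (Finset.univ : Finset Bool))
    (fun e b => (if b then (p:ℝ) else 1 - (p:ℝ)) * (if e ∈ E ∧ b = true then x else 1))
  rw [Fintype.piFinset_univ] at key
  rw [← key]
  have h2 : ∀ e : Sym2 (Fin n),
      (∑ b : Bool, (if b then (p:ℝ) else 1 - (p:ℝ)) * (if e ∈ E ∧ b = true then x else 1))
        = (if e ∈ E then (p:ℝ) * x + (1 - (p:ℝ)) else 1) := by
    intro e
    rw [Fintype.sum_bool]
    by_cases he : e ∈ E <;> simp [he]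
  simp_rw [h2]
  rw [← Finset.prod_filter, show Finset.univ.filter (· ∈ E) = E by simp,
    Finset.prod_const]

def N (E : Finset (Sym2 (Fin n))) (ω : Sym2 (Fin n) → Bool) : ℕ :=
  (E.filter (fun e => ω e = true)).card

lemma sum_exp (p : ℝ≥0) (E : Finset (Sym2 (Fin n))) (t : ℝ) :
    ∑ ω : Sym2 (Fin n) → Bool, W p ω * Real.exp (t * N E ω)
      = ((p:ℝ) * Real.exp t + (1 - (p:ℝ))) ^ E.card := by
  rw [← mgf p E (Real.exp t)]
  refine Finset.sum_congr rfl fun ω _ => ?_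
  rw [mul_comm t, Real.exp_nat_mul]
  rfl

lemma tail_up (hp1 : p ≤ 1) (E : Finset (Sym2 (Fin n))) (s t : ℝ) (ht : 0 ≤ t) :
    gnp n p hp1 {ω | s ≤ (N E ω : ℝ)}
      ≤ ENNReal.ofReal
          (Real.exp (-(t * s)) * ((p:ℝ) * Real.exp t + (1 - (p:ℝ))) ^ E.card) := by
  rw [gnp_set hp1]
  apply ENNReal.ofReal_le_ofReal
  have h1 : ∑ ω ∈ ({ω | s ≤ (N E ω : ℝ)} : Set _).toFinite.toFinset, W p ω
      ≤ ∑ ω : Sym2 (Fin n) → Bool, W p ω * Real.exp (t * N E ω - t * s) := by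
    refine le_trans (Finset.sum_le_sum fun ω hω => ?_)
      (Finset.sum_le_sum_of_subset_of_nonneg (Finset.subset_univ _) fun ω _ _ => ?_)
    · rw [Set.Finite.mem_toFinset] at hω
      refine le_mul_of_one_le_right (W_nonneg hp1 ω) (Real.one_le_exp ?_)
      have : t * s ≤ t * N E ω := mul_le_mul_of_nonneg_left hω ht
      linarith
    · exact mul_nonneg (W_nonneg hp1 ω) (Real.exp_nonneg _)
  refine h1.trans (le_of_eq ?_)
  rw [← sum_exp p E t, Finset.mul_sum]
  refine Finset.sum_congr rfl fun ω _ => ?_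
  rw [show t * N E ω - t * s = -(t*s) + t * N E ω by ring, Real.exp_add]
  ring

lemma tail_low (hp1 : p ≤ 1) (E : Finset (Sym2 (Fin n))) (s t : ℝ) (ht : 0 ≤ t) :
    gnp n p hp1 {ω | (N E ω : ℝ) ≤ s}
      ≤ ENNReal.ofReal
          (Real.exp (t * s) * ((p:ℝ) * Real.exp (-t) + (1 - (p:ℝ))) ^ E.card) := by
  rw [gnp_set hp1]
  apply ENNReal.ofReal_le_ofReal
  have h1 : ∑ ω ∈ ({ω | (N E ω : ℝ) ≤ s} : Set _).toFinite.toFinset, W p ω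
      ≤ ∑ ω : Sym2 (Fin n) → Bool, W p ω * Real.exp (-t * N E ω + t * s) := by
    refine le_trans (Finset.sum_le_sum fun ω hω => ?_)
      (Finset.sum_le_sum_of_subset_of_nonneg (Finset.subset_univ _) fun ω _ _ => ?_)
    · rw [Set.Finite.mem_toFinset] at hω
      refine le_mul_of_one_le_right (W_nonneg hp1 ω) (Real.one_le_exp ?_)
      have : t * N E ω ≤ t * s := mul_le_mul_of_nonneg_left hω ht
      linarith
    · exact mul_nonneg (W_nonneg hp1 ω) (Real.exp_nonneg _)
  refine h1.trans (le_of_eq ?_)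
  rw [← sum_exp p E (-t), Finset.mul_sum]
  refine Finset.sum_congr rfl fun ω _ => ?_
  rw [show -t * (N E ω : ℝ) + t * s = t * s + -t * N E ω by ring, Real.exp_add]
  ring

lemma exp_quad {y : ℝ} (hy : |y| ≤ 1) : Real.exp y ≤ 1 + y + y ^ 2 := by
  have h := Real.exp_bound hy (n := 2) (by norm_num)
  have hsum : ∑ m ∈ Finset.range 2, y ^ m / (m.factorial : ℝ) = 1 + y := by
    simp [Finset.sum_range_succ]
  rw [hsum] at h
  have h2 := (abs_le.mp h).2
  have h3 : |y| ^ 2 = y ^ 2 := sq_abs y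
  rw [h3] at h2
  norm_num [Nat.factorial] at h2
  nlinarith [sq_nonneg y]

lemma chernoff (hp1 : p ≤ 1) (α : ℝ) (hα0 : 0 < α) (hα1 : α ≤ 1)
    (E : Finset (Sym2 (Fin n))) :
    gnp n p hp1 {ω | ¬((1 - α) * E.card * (p:ℝ) ≤ (N E ω : ℝ) ∧
        (N E ω : ℝ) ≤ (1 + α) * E.card * (p:ℝ))}
      ≤ ENNReal.ofReal (2 * Real.exp (-(α ^ 2 / 4) * E.card * (p:ℝ))) := by
  have hr0 : (0:ℝ) ≤ (p:ℝ) := p.coe_nonneg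
  have hr1 : (p:ℝ) ≤ 1 := by exact_mod_cast hp1
  set m : ℝ := (E.card : ℝ) with hm
  have hm0 : 0 ≤ m := Nat.cast_nonneg _
  have ht0 : (0:ℝ) ≤ α / 2 := by linarith
  have htabs : |α / 2| ≤ 1 := by rw [abs_of_nonneg ht0]; linarith
  have htabs' : |-(α / 2)| ≤ 1 := by rw [abs_neg]; exact htabs
  have hup : Real.exp (-((α/2) * ((1 + α) * m * p))) *
      ((p:ℝ) * Real.exp (α/2) + (1 - (p:ℝ))) ^ E.card
        ≤ Real.exp (-(α ^ 2 / 4) * m * (p:ℝ)) := by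
    have h1 : Real.exp (α/2) ≤ 1 + α/2 + (α/2) ^ 2 := exp_quad htabs
    have hbase : (p:ℝ) * Real.exp (α/2) + (1 - (p:ℝ))
        ≤ Real.exp ((p:ℝ) * (α/2 + (α/2) ^ 2)) := by
      have h2 : (p:ℝ) * Real.exp (α/2) + (1 - (p:ℝ))
          ≤ 1 + (p:ℝ) * (α/2 + (α/2) ^ 2) := by nlinarith
      have h3 := Real.add_one_le_exp ((p:ℝ) * (α/2 + (α/2) ^ 2))
      linarith
    have hbase0 : 0 ≤ (p:ℝ) * Real.exp (α/2) + (1 - (p:ℝ)) := by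
      have := Real.exp_nonneg (α/2)
      nlinarith
    have hpow := pow_le_pow_left₀ hbase0 hbase E.card
    rw [← Real.exp_nat_mul] at hpow
    calc Real.exp (-((α/2) * ((1 + α) * m * p))) *
          ((p:ℝ) * Real.exp (α/2) + (1 - (p:ℝ))) ^ E.card
        ≤ Real.exp (-((α/2) * ((1 + α) * m * p))) *
          Real.exp (m * ((p:ℝ) * (α/2 + (α/2) ^ 2))) := by
          exact mul_le_mul_of_nonneg_left hpow (Real.exp_nonneg _)
      _ = Real.exp (-((α/2) * ((1 + α) * m * p)) + m * ((p:ℝ) * (α/2 + (α/2) ^ 2))) := by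
          rw [Real.exp_add]
      _ ≤ Real.exp (-(α ^ 2 / 4) * m * (p:ℝ)) := by
          apply Real.exp_le_exp.mpr
          ring_nf
          nlinarith
  have hlow : Real.exp ((α/2) * ((1 - α) * m * p)) *
      ((p:ℝ) * Real.exp (-(α/2)) + (1 - (p:ℝ))) ^ E.card
        ≤ Real.exp (-(α ^ 2 / 4) * m * (p:ℝ)) := by
    have h1 : Real.exp (-(α/2)) ≤ 1 + (-(α/2)) + (-(α/2)) ^ 2 := exp_quad htabs'
    have hbase : (p:ℝ) * Real.exp (-(α/2)) + (1 - (p:ℝ))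
        ≤ Real.exp ((p:ℝ) * (-(α/2) + (α/2) ^ 2)) := by
      have h2 : (p:ℝ) * Real.exp (-(α/2)) + (1 - (p:ℝ))
          ≤ 1 + (p:ℝ) * (-(α/2) + (α/2) ^ 2) := by nlinarith
      have h3 := Real.add_one_le_exp ((p:ℝ) * (-(α/2) + (α/2) ^ 2))
      linarith
    have hbase0 : 0 ≤ (p:ℝ) * Real.exp (-(α/2)) + (1 - (p:ℝ)) := by
      have := Real.exp_nonneg (-(α/2))
      nlinarith
    have hpow := pow_le_pow_left₀ hbase0 hbase E.card
    rw [← Real.exp_nat_mul] at hpow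
    calc Real.exp ((α/2) * ((1 - α) * m * p)) *
          ((p:ℝ) * Real.exp (-(α/2)) + (1 - (p:ℝ))) ^ E.card
        ≤ Real.exp ((α/2) * ((1 - α) * m * p)) *
          Real.exp (m * ((p:ℝ) * (-(α/2) + (α/2) ^ 2))) := by
          exact mul_le_mul_of_nonneg_left hpow (Real.exp_nonneg _)
      _ = Real.exp ((α/2) * ((1 - α) * m * p) + m * ((p:ℝ) * (-(α/2) + (α/2) ^ 2))) := by
          rw [Real.exp_add]
      _ ≤ Real.exp (-(α ^ 2 / 4) * m * (p:ℝ)) := by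
          apply Real.exp_le_exp.mpr
          ring_nf
          nlinarith
  have hsub : {ω : Sym2 (Fin n) → Bool | ¬((1 - α) * m * (p:ℝ) ≤ (N E ω : ℝ) ∧
        (N E ω : ℝ) ≤ (1 + α) * m * (p:ℝ))}
      ⊆ {ω | (1 + α) * m * (p:ℝ) ≤ (N E ω : ℝ)} ∪ {ω | (N E ω : ℝ) ≤ (1 - α) * m * (p:ℝ)} := by
    intro ω hω
    simp only [Set.mem_setOf_eq, Set.mem_union] at hω ⊢
    rcases not_and_or.mp hω with h | h
    · exact Or.inr (le_of_not_ge h)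
    · exact Or.inl (le_of_not_ge h)
  refine (measure_mono hsub).trans ((measure_union_le _ _).trans ?_)
  have b1 := (tail_up hp1 E ((1 + α) * m * (p:ℝ)) (α/2) ht0).trans
    (ENNReal.ofReal_le_ofReal hup)
  have b2 := (tail_low hp1 E ((1 - α) * m * (p:ℝ)) (α/2) ht0).trans
    (ENNReal.ofReal_le_ofReal hlow)
  refine (add_le_add b1 b2).trans (le_of_eq ?_)
  rw [← ENNReal.ofReal_add (Real.exp_nonneg _) (Real.exp_nonneg _)]
  congr 1
  ring

def ES (A B : Finset (Fin n)) : Finset (Sym2 (Fin n)) :=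
  (A ×ˢ B).image (fun q => s(q.1, q.2))

lemma injOn_mk {A B : Finset (Fin n)} (hd : Disjoint A B) :
    Set.InjOn (fun q : Fin n × Fin n => s(q.1, q.2)) ↑(A ×ˢ B) := by
  rintro ⟨a, b⟩ hab ⟨c, d⟩ hcd h
  simp only [Finset.coe_product, Set.mem_prod, Finset.mem_coe] at hab hcd
  simp only [Sym2.eq_iff] at h
  rcases h with ⟨rfl, rfl⟩ | ⟨rfl, rfl⟩
  · rfl
  · exact ((Finset.disjoint_right.mp hd hab.2) hcd.1).elim

lemma card_ES {A B : Finset (Fin n)} (hd : Disjoint A B) :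
    (ES A B).card = A.card * B.card := by
  rw [ES, Finset.card_image_of_injOn (injOn_mk hd), Finset.card_product]

lemma count_eq {A B : Finset (Fin n)} (hd : Disjoint A B) (ω : Sym2 (Fin n) → Bool) :
    edgeCount (graphOf ω) ↑A ↑B = N (ES A B) ω := by
  have hset : {e : Fin n × Fin n | e.1 ∈ (A:Set (Fin n)) ∧ e.2 ∈ (B:Set (Fin n)) ∧
      (graphOf ω).Adj e.1 e.2}
      = ↑((A ×ˢ B).filter (fun q => ω s(q.1, q.2) = true)) := by
    ext ⟨a, b⟩
    simp only [Set.mem_setOf_eq, Finset.coe_filter, Finset.mem_product, Finset.mem_coe,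
      graphOf, SimpleGraph.fromEdgeSet_adj, Set.mem_setOf_eq]
    constructor
    · rintro ⟨ha, hb, hadj, -⟩
      exact ⟨⟨ha, hb⟩, hadj⟩
    · rintro ⟨⟨ha, hb⟩, hω⟩
      exact ⟨ha, hb, hω, fun h => Finset.disjoint_left.mp hd ha (h ▸ hb)⟩
  rw [edgeCount, hset, Set.ncard_coe_finset, N, ES, Finset.filter_image,
    Finset.card_image_of_injOn ((injOn_mk hd).mono ?_)]
  intro q hq
  simp only [Finset.coe_filter, Set.mem_setOf_eq] at hq
  simp only [Finset.coe_product, Set.mem_prod, Finset.mem_coe]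
  exact Finset.mem_product.mp hq.1

lemma sum_pow_card (y : ℝ) :
    ∑ A : Finset (Fin n), y ^ A.card = (1 + y) ^ n := by
  have h := Finset.prod_add (fun _ : Fin n => y) (fun _ => (1:ℝ)) Finset.univ
  simp only [Finset.prod_const, Finset.prod_const_one, mul_one, one_pow, Finset.card_univ,
    Fintype.card_fin, Finset.powerset_univ] at h
  rw [add_comm y 1] at h
  exact h.symm

lemma sum_pow_card_nonempty (y : ℝ) :
    ∑ A ∈ Finset.univ.filter (fun A : Finset (Fin n) => A.Nonempty), y ^ A.card
      = (1 + y) ^ n - 1 := by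
  have hfe : Finset.univ.filter (fun A : Finset (Fin n) => A.Nonempty)
      = Finset.univ.erase ∅ := by
    ext A
    simp [Finset.nonempty_iff_ne_empty]
  rw [hfe, ← sum_pow_card (n := n) y,
    ← Finset.add_sum_erase _ _ (Finset.mem_univ (∅ : Finset (Fin n)))]
  simp

lemma sum_bound (hn : 2 ≤ n) :
    ∑ A ∈ Finset.univ.filter (fun A : Finset (Fin n) => A.Nonempty),
        Real.exp (-(9/8) * Real.log n) ^ A.card
      ≤ 2 * Real.exp (-(1/8) * Real.log n) := by
  set y := Real.exp (-(9/8) * Real.log n) with hy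
  have hy0 : 0 ≤ y := Real.exp_nonneg _
  have hnpos : (0:ℝ) < n := by
    have : (2:ℝ) ≤ n := by exact_mod_cast hn
    linarith
  have hlogn : 0 ≤ Real.log n := Real.log_nonneg (by exact_mod_cast hn.trans' (by norm_num))
  have hny : (n:ℝ) * y = Real.exp (-(1/8) * Real.log n) := by
    rw [hy]
    nth_rewrite 1 [(Real.exp_log hnpos).symm]
    rw [← Real.exp_add]
    congr 1
    ring
  have hny1 : (n:ℝ) * y ≤ 1 := by
    rw [hny]
    exact Real.exp_le_one_iff.mpr (by nlinarith)
  have hny0 : 0 ≤ (n:ℝ) * y := by positivity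
  rw [sum_pow_card_nonempty y]
  have h1 : (1 + y) ^ n ≤ Real.exp ((n:ℝ) * y) := by
    have h2 : 1 + y ≤ Real.exp y := by
      have := Real.add_one_le_exp y
      linarith
    calc (1 + y) ^ n ≤ Real.exp y ^ n := pow_le_pow_left₀ (by linarith) h2 n
      _ = Real.exp ((n:ℝ) * y) := (Real.exp_nat_mul y n).symm
  have h3 : Real.exp ((n:ℝ) * y) ≤ 1 + 2 * ((n:ℝ) * y) := by
    have h4 := exp_quad (y := (n:ℝ) * y) (by rw [abs_of_nonneg hny0]; exact hny1)
    nlinarith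
  rw [← hny]
  linarith


lemma mu_dev_le (hp1 : p ≤ 1) (α : ℝ) (hα0 : 0 < α) (hα1 : α ≤ 1)
    {A B : Finset (Fin n)} (hd : Disjoint A B) :
    gnp n p hp1 {ω | ¬((1 - α) * A.card * B.card * (p:ℝ) ≤ (edgeCount (graphOf ω) ↑A ↑B : ℝ) ∧
        (edgeCount (graphOf ω) ↑A ↑B : ℝ) ≤ (1 + α) * A.card * B.card * (p:ℝ))}
      ≤ ENNReal.ofReal (2 * Real.exp (-(α ^ 2 / 4) * ((A.card:ℝ) * B.card) * (p:ℝ))) := by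
  have h := chernoff hp1 α hα0 hα1 (ES A B)
  have hcard : ((ES A B).card : ℝ) = (A.card : ℝ) * B.card := by
    rw [card_ES hd]; push_cast; ring
  have hsets : {ω : Sym2 (Fin n) → Bool |
      ¬((1 - α) * A.card * B.card * (p:ℝ) ≤ (edgeCount (graphOf ω) ↑A ↑B : ℝ) ∧
        (edgeCount (graphOf ω) ↑A ↑B : ℝ) ≤ (1 + α) * A.card * B.card * (p:ℝ))}
      = {ω | ¬((1 - α) * (ES A B).card * (p:ℝ) ≤ (N (ES A B) ω : ℝ) ∧
          (N (ES A B) ω : ℝ) ≤ (1 + α) * (ES A B).card * (p:ℝ))} := by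
    ext ω
    simp only [Set.mem_setOf_eq, count_eq hd ω, hcard]
    rw [show (1-α)*((A.card:ℝ)*B.card)*(p:ℝ) = (1-α)*A.card*B.card*(p:ℝ) from by ring,
      show (1+α)*((A.card:ℝ)*B.card)*(p:ℝ) = (1+α)*A.card*B.card*(p:ℝ) from by ring]
  rw [hsets]
  refine h.trans (ENNReal.ofReal_le_ofReal (le_of_eq ?_))
  rw [hcard]

lemma prod_sum_bound {n : ℕ} (hn : 2 ≤ n) :
    ∑ AB ∈ (Finset.univ.filter fun A : Finset (Fin n) => A.Nonempty) ×ˢ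
        (Finset.univ.filter fun B : Finset (Fin n) => B.Nonempty),
      2 * Real.exp (-(9/8) * ((AB.1.card : ℝ) + AB.2.card) * Real.log n)
      ≤ 8 * Real.exp (-(1/4) * Real.log n) := by
  rw [Finset.sum_product]
  set y := Real.exp (-(9/8) * Real.log n) with hy
  have hy0 : 0 ≤ y := Real.exp_nonneg _
  have hterm : ∀ (A B : Finset (Fin n)),
      2 * Real.exp (-(9/8) * ((A.card:ℝ) + B.card) * Real.log n)
        = 2 * (y ^ A.card * y ^ B.card) := by
    intro A B
    rw [hy, ← Real.exp_nat_mul, ← Real.exp_nat_mul, ← Real.exp_add]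
    congr 1
    ring
  simp_rw [hterm]
  set F := Finset.univ.filter (fun A : Finset (Fin n) => A.Nonempty) with hF
  set S := ∑ A ∈ F, y ^ A.card with hS
  have hfact : ∑ A ∈ F, ∑ B ∈ F, 2 * (y ^ A.card * y ^ B.card) = 2 * (S * S) := by
    rw [hS, Finset.sum_mul_sum, Finset.mul_sum]
    refine Finset.sum_congr rfl fun A _ => ?_
    rw [Finset.mul_sum]
  rw [hfact]
  have hS0 : 0 ≤ S := Finset.sum_nonneg fun A _ => pow_nonneg hy0 _
  have hSle : S ≤ 2 * Real.exp (-(1/8) * Real.log n) := sum_bound hn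
  have he0 : 0 ≤ Real.exp (-(1/8) * Real.log n) := Real.exp_nonneg _
  have hee : Real.exp (-(1/8) * Real.log n) * Real.exp (-(1/8) * Real.log n)
      = Real.exp (-(1/4) * Real.log n) := by
    rw [← Real.exp_add]
    congr 1
    ring
  nlinarith [hee]

end StmtAux

open StmtAux in
set_option maxHeartbeats 2000000 in
/-- Lemma 4.2: with `C = 6/(α²β)` and `D = 9/α²`, w.h.p. any two disjoint sets `X,Y` with
`|X|,|Y| ≥ D log n/p`, or with `|X| ≥ C/p` and `|Y| ≥ βn`, satisfy
`e(X,Y) = (1 ± α)|X||Y|p`. -/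
theorem stmt12 (α β : ℝ) (hα : 0 < α) (hα1 : α < 1) (hβ : 0 < β) (hβ1 : β < 1)
    (C D : ℝ) (hC : C = 6 / (α ^ 2 * β)) (hD : D = 9 / α ^ 2)
    (p : ℕ → ℝ≥0) (hp0 : ∀ n, 0 < p n) (hp1 : ∀ n, p n < 1) :
    Tendsto (fun n => gnp n (p n) (hp1 n).le
      {ω | ∀ X Y : Set (Fin n), Disjoint X Y →
        ((D * Real.log n / (p n : ℝ) ≤ (X.ncard : ℝ) ∧
            D * Real.log n / (p n : ℝ) ≤ (Y.ncard : ℝ)) ∨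
         (C / (p n : ℝ) ≤ (X.ncard : ℝ) ∧ β * n ≤ (Y.ncard : ℝ))) →
        (1 - α) * (X.ncard : ℝ) * (Y.ncard : ℝ) * (p n : ℝ)
          ≤ (edgeCount (graphOf ω) X Y : ℝ) ∧
        (edgeCount (graphOf ω) X Y : ℝ)
          ≤ (1 + α) * (X.ncard : ℝ) * (Y.ncard : ℝ) * (p n : ℝ)})
      atTop (nhds 1) := by
  classical
  set badp : ℕ → ℝ := fun n =>
    8 * Real.exp (-(1/4) * Real.log n) + 2 * ((2:ℝ)^n * 2^n) * Real.exp (-(3/2) * n)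
    with hbadpdef
  -- badp → 0
  have hlog : Tendsto (fun n : ℕ => Real.log n) atTop atTop :=
    Real.tendsto_log_atTop.comp tendsto_natCast_atTop_atTop
  have h1 : Tendsto (fun n : ℕ => Real.exp (-(1/4) * Real.log n)) atTop (nhds 0) :=
    Real.tendsto_exp_atBot.comp (hlog.const_mul_atTop_of_neg (by norm_num))
  have h2 : Tendsto (fun n : ℕ => 2 * ((2:ℝ)^n * 2^n) * Real.exp (-(3/2) * n))
      atTop (nhds 0) := by
    have heq : ∀ n : ℕ, 2 * ((2:ℝ)^n * 2^n) * Real.exp (-(3/2) * n)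
        = 2 * Real.exp ((2 * Real.log 2 - 3/2) * n) := by
      intro n
      rw [show ((2:ℝ)^n) = Real.exp (Real.log 2 * n) from by
        rw [mul_comm, Real.exp_nat_mul, Real.exp_log two_pos],
        ← Real.exp_add, mul_assoc, ← Real.exp_add]
      congr 1
      ring
    simp only [heq]
    have hc : (2 * Real.log 2 - 3/2) < 0 := by
      have := Real.log_two_lt_d9
      linarith
    have h3 : Tendsto (fun n : ℕ => (2 * Real.log 2 - 3/2) * (n:ℝ)) atTop atBot :=
      (tendsto_natCast_atTop_atTop (R := ℝ)).const_mul_atTop_of_neg hc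
    have h4 := Real.tendsto_exp_atBot.comp h3
    have h5 := h4.const_mul (2:ℝ)
    simpa using h5
  have hbadp0 : Tendsto badp atTop (nhds 0) := by
    have h0 := (h1.const_mul (8:ℝ)).add h2
    simpa only [mul_zero, add_zero] using h0
  -- squeeze
  refine tendsto_of_tendsto_of_tendsto_of_le_of_le'
    (g := fun n => 1 - ENNReal.ofReal (badp n)) (h := fun _ => (1:ℝ≥0∞)) ?_ ?_ ?_ ?_
  · have hof : Tendsto (fun n => ENNReal.ofReal (badp n)) atTop (nhds 0) := by
      rw [← ENNReal.ofReal_zero]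
      exact (ENNReal.continuous_ofReal.tendsto 0).comp hbadp0
    have := ENNReal.Tendsto.sub (tendsto_const_nhds (x := (1:ℝ≥0∞))) hof
      (Or.inl ENNReal.one_ne_top)
    simpa using this
  · exact tendsto_const_nhds
  · -- main eventual lower bound
    filter_upwards [eventually_ge_atTop 2] with n hn
    set r : ℝ := (p n : ℝ) with hrdef
    have hr0 : (0:ℝ) < r := by exact_mod_cast hp0 n
    have hr1 : r ≤ 1 := by exact_mod_cast (hp1 n).le
    have hL0 : (0:ℝ) < Real.log n := Real.log_pos (by exact_mod_cast hn)
    set L : ℝ := Real.log n with hLdef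
    set dev : Finset (Fin n) × Finset (Fin n) → Set (Sym2 (Fin n) → Bool) := fun AB =>
      {ω | ¬((1 - α) * AB.1.card * AB.2.card * r ≤ (edgeCount (graphOf ω) ↑AB.1 ↑AB.2 : ℝ) ∧
        (edgeCount (graphOf ω) ↑AB.1 ↑AB.2 : ℝ) ≤ (1 + α) * AB.1.card * AB.2.card * r)}
      with hdevdef
    set P1 : Finset (Fin n) × Finset (Fin n) → Prop := fun AB =>
      Disjoint AB.1 AB.2 ∧ D * L / r ≤ (AB.1.card : ℝ) ∧ D * L / r ≤ (AB.2.card : ℝ)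
      with hP1def
    set P2 : Finset (Fin n) × Finset (Fin n) → Prop := fun AB =>
      Disjoint AB.1 AB.2 ∧ C / r ≤ (AB.1.card : ℝ) ∧ β * n ≤ (AB.2.card : ℝ)
      with hP2def
    set bad : Set (Sym2 (Fin n) → Bool) :=
      (⋃ AB ∈ Finset.univ.filter P1, dev AB) ∪ (⋃ AB ∈ Finset.univ.filter P2, dev AB)
      with hbaddef
    have hmeas : MeasurableSet bad := (Set.toFinite bad).measurableSet
    -- subset property
    have hsubset : badᶜ ⊆ {ω : Sym2 (Fin n) → Bool | ∀ X Y : Set (Fin n), Disjoint X Y →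
        ((D * Real.log n / (p n : ℝ) ≤ (X.ncard : ℝ) ∧
            D * Real.log n / (p n : ℝ) ≤ (Y.ncard : ℝ)) ∨
         (C / (p n : ℝ) ≤ (X.ncard : ℝ) ∧ β * n ≤ (Y.ncard : ℝ))) →
        (1 - α) * (X.ncard : ℝ) * (Y.ncard : ℝ) * (p n : ℝ)
          ≤ (edgeCount (graphOf ω) X Y : ℝ) ∧
        (edgeCount (graphOf ω) X Y : ℝ)
          ≤ (1 + α) * (X.ncard : ℝ) * (Y.ncard : ℝ) * (p n : ℝ)} := by
      intro ω hω
      intro X Y hXY hcond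
      set A : Finset (Fin n) := X.toFinite.toFinset with hA
      set B : Finset (Fin n) := Y.toFinite.toFinset with hB
      have hXA : (↑A : Set (Fin n)) = X := Set.Finite.coe_toFinset _
      have hYB : (↑B : Set (Fin n)) = Y := Set.Finite.coe_toFinset _
      have hcardA : (X.ncard : ℝ) = (A.card : ℝ) := by
        rw [← hXA, Set.ncard_coe_finset]
      have hcardB : (Y.ncard : ℝ) = (B.card : ℝ) := by
        rw [← hYB, Set.ncard_coe_finset]
      have hdAB : Disjoint A B := by
        rw [← Finset.disjoint_coe, hXA, hYB]; exact hXY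
      have hP : P1 (A, B) ∨ P2 (A, B) := by
        rcases hcond with ⟨hc1, hc2⟩ | ⟨hc1, hc2⟩
        · left
          exact ⟨hdAB, by rw [← hcardA]; exact hc1, by rw [← hcardB]; exact hc2⟩
        · right
          exact ⟨hdAB, by rw [← hcardA]; exact hc1, by rw [← hcardB]; exact hc2⟩
      have hnotdev : ω ∉ dev (A, B) := by
        intro hmem
        apply hω
        rcases hP with h | h
        · refine Or.inl ?_
          simp only [Set.mem_iUnion]
          exact ⟨(A, B), Finset.mem_filter.mpr ⟨Finset.mem_univ _, h⟩, hmem⟩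
        · refine Or.inr ?_
          simp only [Set.mem_iUnion]
          exact ⟨(A, B), Finset.mem_filter.mpr ⟨Finset.mem_univ _, h⟩, hmem⟩
      rw [hdevdef] at hnotdev
      simp only [Set.mem_setOf_eq, not_not] at hnotdev
      rw [hcardA, hcardB, ← hXA, ← hYB]
      exact hnotdev
    -- measure bound
    have hα1' : α ≤ 1 := hα1.le
    have haD : α ^ 2 * D = 9 := by
      rw [hD]; field_simp
    have haC : α ^ 2 * C * β = 6 := by
      rw [hC]; field_simp
    have hb1 : gnp n (p n) (hp1 n).le (⋃ AB ∈ Finset.univ.filter P1, dev AB)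
        ≤ ENNReal.ofReal (8 * Real.exp (-(1/4) * L)) := by
      refine (measure_biUnion_finset_le _ _).trans ?_
      have hterm : ∀ AB ∈ Finset.univ.filter P1,
          gnp n (p n) (hp1 n).le (dev AB)
            ≤ ENNReal.ofReal (2 * Real.exp (-(9/8) * ((AB.1.card : ℝ) + AB.2.card) * L)) := by
        intro AB hAB
        obtain ⟨hd, hc1, hc2⟩ := (Finset.mem_filter.mp hAB).2
        refine (mu_dev_le (hp1 n).le α hα hα1' hd).trans (ENNReal.ofReal_le_ofReal ?_)
        have ha : (0:ℝ) ≤ AB.1.card := Nat.cast_nonneg _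
        have hb : (0:ℝ) ≤ AB.2.card := Nat.cast_nonneg _
        have hdl1 : D * L ≤ (AB.1.card : ℝ) * r := (div_le_iff₀ hr0).mp hc1
        have hdl2 : D * L ≤ (AB.2.card : ℝ) * r := (div_le_iff₀ hr0).mp hc2
        have h3 : (AB.1.card : ℝ) * (D * L) + AB.2.card * (D * L)
            ≤ 2 * ((AB.1.card : ℝ) * AB.2.card * r) := by
          nlinarith [mul_le_mul_of_nonneg_left hdl2 ha, mul_le_mul_of_nonneg_left hdl1 hb]
        have h4 := mul_le_mul_of_nonneg_left h3 (sq_nonneg α)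
        have h5 : α ^ 2 * ((AB.1.card : ℝ) * (D * L) + AB.2.card * (D * L))
            = 9 * (((AB.1.card : ℝ) + AB.2.card) * L) := by
          rw [show α ^ 2 * ((AB.1.card : ℝ) * (D * L) + AB.2.card * (D * L))
            = (α ^ 2 * D) * (((AB.1.card : ℝ) + AB.2.card) * L) from by ring, haD]
        have hexp : -(α ^ 2 / 4) * ((AB.1.card : ℝ) * AB.2.card) * r
            ≤ -(9/8) * ((AB.1.card : ℝ) + AB.2.card) * L := by
          nlinarith [h4, h5]
        have := Real.exp_le_exp.mpr hexp
        linarith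
      refine (Finset.sum_le_sum hterm).trans ?_
      have hsub1 : Finset.univ.filter P1
          ⊆ (Finset.univ.filter fun A : Finset (Fin n) => A.Nonempty) ×ˢ
            (Finset.univ.filter fun B : Finset (Fin n) => B.Nonempty) := by
        intro AB hAB
        obtain ⟨hd, hc1, hc2⟩ := (Finset.mem_filter.mp hAB).2
        have hDL0 : 0 < D * L / r := by
          apply div_pos _ hr0
          apply mul_pos _ hL0
          rw [hD]; positivity
        rw [Finset.mem_product]
        constructor
        · refine Finset.mem_filter.mpr ⟨Finset.mem_univ _, Finset.card_pos.mp ?_⟩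
          by_contra hcc
          push_neg at hcc
          interval_cases h : AB.1.card
          · simp only [Nat.cast_zero] at hc1
            linarith
        · refine Finset.mem_filter.mpr ⟨Finset.mem_univ _, Finset.card_pos.mp ?_⟩
          by_contra hcc
          push_neg at hcc
          interval_cases h : AB.2.card
          · simp only [Nat.cast_zero] at hc2
            linarith
      refine (Finset.sum_le_sum_of_subset hsub1).trans ?_
      rw [← ENNReal.ofReal_sum_of_nonneg (fun AB _ => by positivity)]
      exact ENNReal.ofReal_le_ofReal (prod_sum_bound hn)
    have hb2 : gnp n (p n) (hp1 n).le (⋃ AB ∈ Finset.univ.filter P2, dev AB)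
        ≤ ENNReal.ofReal (2 * ((2:ℝ)^n * 2^n) * Real.exp (-(3/2) * n)) := by
      refine (measure_biUnion_finset_le _ _).trans ?_
      have hterm : ∀ AB ∈ Finset.univ.filter P2,
          gnp n (p n) (hp1 n).le (dev AB)
            ≤ ENNReal.ofReal (2 * Real.exp (-(3/2) * n)) := by
        intro AB hAB
        obtain ⟨hd, hc1, hc2⟩ := (Finset.mem_filter.mp hAB).2
        refine (mu_dev_le (hp1 n).le α hα hα1' hd).trans (ENNReal.ofReal_le_ofReal ?_)
        have ha : (0:ℝ) ≤ AB.1.card := Nat.cast_nonneg _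
        have hb : (0:ℝ) ≤ AB.2.card := Nat.cast_nonneg _
        have hn0 : (0:ℝ) ≤ n := Nat.cast_nonneg _
        have hC0 : (0:ℝ) < C := by rw [hC]; positivity
        have h1 : C ≤ (AB.1.card : ℝ) * r := (div_le_iff₀ hr0).mp hc1
        have h2 : C * (β * n) ≤ C * AB.2.card := mul_le_mul_of_nonneg_left hc2 hC0.le
        have h3 : C * (AB.2.card : ℝ) ≤ (AB.1.card : ℝ) * r * AB.2.card :=
          mul_le_mul_of_nonneg_right h1 hb
        have h4 := mul_le_mul_of_nonneg_left (h2.trans h3) (sq_nonneg α)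
        have h5 : α ^ 2 * (C * (β * n)) = 6 * n := by
          rw [show α ^ 2 * (C * (β * (n:ℝ))) = (α ^ 2 * C * β) * n from by ring, haC]
        have hexp : -(α ^ 2 / 4) * ((AB.1.card : ℝ) * AB.2.card) * r ≤ -(3/2) * n := by
          nlinarith [h4, h5]
        have := Real.exp_le_exp.mpr hexp
        linarith
      refine (Finset.sum_le_sum hterm).trans ?_
      refine (Finset.sum_le_sum_of_subset (Finset.subset_univ _)).trans ?_
      rw [Finset.sum_const, Finset.card_univ]
      have hcard : (Fintype.card (Finset (Fin n) × Finset (Fin n)) : ℝ)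
          = (2:ℝ)^n * 2^n := by
        rw [Fintype.card_prod, Fintype.card_finset, Fintype.card_fin]
        push_cast
        ring
      rw [nsmul_eq_mul, ← ENNReal.ofReal_natCast, ← ENNReal.ofReal_mul (Nat.cast_nonneg _)]
      apply ENNReal.ofReal_le_ofReal
      rw [hcard]
      ring_nf
      exact le_refl _
    have hbadle : gnp n (p n) (hp1 n).le bad ≤ ENNReal.ofReal (badp n) := by
      rw [hbaddef]
      refine (measure_union_le _ _).trans ?_
      refine (add_le_add hb1 hb2).trans (le_of_eq ?_)
      rw [← ENNReal.ofReal_add (by positivity) (by positivity)]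
    calc 1 - ENNReal.ofReal (badp n)
        ≤ 1 - gnp n (p n) (hp1 n).le bad := tsub_le_tsub_left hbadle 1
      _ = gnp n (p n) (hp1 n).le badᶜ := (prob_compl_eq_one_sub hmeas).symm
      _ ≤ _ := measure_mono hsubset
  · exact Eventually.of_forall fun n => prob_le_one
end
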